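/- arXiv:1302.3771 — 2 statements merged into one kernel-verified Lean document; each statement's English description precedes it below -/
import Mathlib

section
/- With the matching constants of the glued solution pair from Lemma 1, the Wronskian of the glued functions is piecewise proportional to the scale density with a single constant: if ψ̃ = ψ_{λ+α} on x ≤ ℓ, ψ̃ = Aψ_λ + Bφ_λ on x > ℓ, and φ̃ = Cψ_{λ+α} + Dφ_{λ+α} on x ≤ ℓ, φ̃ = φ_λ on x > ℓ, with A,B,C,D chosen so that ψ̃, φ̃ are C¹ at ℓ, then W[φ̃, ψ̃](x) = (W[φ_λ, ψ_{λ+α}](ℓ)/𝔰(ℓ)) · 𝔰(x) for all x. -/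
open MeasureTheory intervalIntegral

/-- The Wronskian `W[f,g](x) = f x * g' x - g x * f' x`. -/
noncomputable def Wron (f g : ℝ → ℝ) (x : ℝ) : ℝ := f x * deriv g x - g x * deriv f x

/-- The scale density `𝔰(x) = exp (−∫_{x₀}^x 2 a(z)/b(z)² dz)`. -/
noncomputable def scaleDensity (a b : ℝ → ℝ) (x₀ x : ℝ) : ℝ :=
  Real.exp (-(∫ z in x₀..x, 2 * a z / (b z) ^ 2))

lemma glue_hasDerivAt {f g : ℝ → ℝ} {ℓ d : ℝ} (hf : HasDerivAt f d ℓ)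
    (hg : HasDerivAt g d ℓ) (hval : f ℓ = g ℓ) :
    HasDerivAt (fun y => if y ≤ ℓ then f y else g y) d ℓ := by
  have h1 : HasDerivWithinAt (fun y => if y ≤ ℓ then f y else g y) d (Set.Iic ℓ) ℓ :=
    hf.hasDerivWithinAt.congr (fun y hy => by simp [Set.mem_Iic.mp hy]) (by simp)
  have h2 : HasDerivWithinAt (fun y => if y ≤ ℓ then f y else g y) d (Set.Ici ℓ) ℓ := by
    refine hg.hasDerivWithinAt.congr (fun y hy => ?_) (by simp [hval])
    rcases lt_or_eq_of_le (Set.mem_Ici.mp hy) with h | h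
    · simp [not_le.mpr h]
    · simp [← h, hval]
  have h3 := h1.union h2
  rw [Set.Iic_union_Ici] at h3
  exact hasDerivWithinAt_univ.mp h3

/-- The Wronskian of the glued pair `ψ̃, φ̃` of Lemma 1 (glued across the
level `ℓ` with the C¹ matching constants `A, B, C, D`) equals
`(W[φ_λ, ψ_{λ+α}](ℓ)/𝔰(ℓ)) 𝔰(x)` for all `x`. -/
theorem glued_wronskian_eq (I : Set ℝ) (hI : IsOpen I) (hconv : Convex ℝ I)
    (a b : ℝ → ℝ) (ha : ContinuousOn a I) (hbcont : ContinuousOn b I)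
    (hb : ∀ x ∈ I, 0 < b x) (lam α ℓ x₀ : ℝ) (hℓ : ℓ ∈ I) (hx₀ : x₀ ∈ I)
    (ψl φl ψa φa : ℝ → ℝ)
    -- differentiability of the four fundamental solutions
    (hψld : ∀ x ∈ I, DifferentiableAt ℝ ψl x)
    (hψld2 : ∀ x ∈ I, DifferentiableAt ℝ (deriv ψl) x)
    (hφld : ∀ x ∈ I, DifferentiableAt ℝ φl x)
    (hφld2 : ∀ x ∈ I, DifferentiableAt ℝ (deriv φl) x)
    (hψad : ∀ x ∈ I, DifferentiableAt ℝ ψa x)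
    (hψad2 : ∀ x ∈ I, DifferentiableAt ℝ (deriv ψa) x)
    (hφad : ∀ x ∈ I, DifferentiableAt ℝ φa x)
    (hφad2 : ∀ x ∈ I, DifferentiableAt ℝ (deriv φa) x)
    -- `ψ_λ, φ_λ` solve the ODE with eigenvalue `λ`,
    -- `ψ_{λ+α}, φ_{λ+α}` solve it with eigenvalue `λ + α`
    (hψl : ∀ x ∈ I, (1/2) * (b x) ^ 2 * deriv (deriv ψl) x + a x * deriv ψl x = lam * ψl x)
    (hφl : ∀ x ∈ I, (1/2) * (b x) ^ 2 * deriv (deriv φl) x + a x * deriv φl x = lam * φl x)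
    (hψa : ∀ x ∈ I, (1/2) * (b x) ^ 2 * deriv (deriv ψa) x + a x * deriv ψa x
      = (lam + α) * ψa x)
    (hφa : ∀ x ∈ I, (1/2) * (b x) ^ 2 * deriv (deriv φa) x + a x * deriv φa x
      = (lam + α) * φa x)
    -- `W[φ_γ,ψ_γ](x) = 𝒲_γ 𝔰(x)` with `𝒲_γ ≠ 0` for `γ = λ, λ+α`
    (Wl Wa : ℝ) (hWl : Wl ≠ 0) (hWa : Wa ≠ 0)
    (hsl : ∀ x ∈ I, Wron φl ψl x = Wl * scaleDensity a b x₀ x)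
    (hsa : ∀ x ∈ I, Wron φa ψa x = Wa * scaleDensity a b x₀ x) :
    ∀ x ∈ I,
      Wron
        (fun y => if y ≤ ℓ then
            (Wron φa φl ℓ / Wron φa ψa ℓ) * ψa y + (Wron φl ψa ℓ / Wron φa ψa ℓ) * φa y
          else φl y)
        (fun y => if y ≤ ℓ then ψa y
          else (Wron φl ψa ℓ / Wron φl ψl ℓ) * ψl y
            + (Wron ψa ψl ℓ / Wron φl ψl ℓ) * φl y) x
        = (Wron φl ψa ℓ / scaleDensity a b x₀ ℓ) * scaleDensity a b x₀ x := by
  intro x hx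
  have hsℓ : (0:ℝ) < scaleDensity a b x₀ ℓ := Real.exp_pos _
  have hWaℓ : Wron φa ψa ℓ = Wa * scaleDensity a b x₀ ℓ := hsa ℓ hℓ
  have hWlℓ : Wron φl ψl ℓ = Wl * scaleDensity a b x₀ ℓ := hsl ℓ hℓ
  have hWa0 : Wron φa ψa ℓ ≠ 0 := by rw [hWaℓ]; exact mul_ne_zero hWa hsℓ.ne'
  have hWl0 : Wron φl ψl ℓ ≠ 0 := by rw [hWlℓ]; exact mul_ne_zero hWl hsℓ.ne'
  set C := Wron φa φl ℓ / Wron φa ψa ℓ with hC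
  set D := Wron φl ψa ℓ / Wron φa ψa ℓ with hD
  set A := Wron φl ψa ℓ / Wron φl ψl ℓ with hA
  set B := Wron ψa ψl ℓ / Wron φl ψl ℓ with hB
  -- derivatives of the combined branch functions
  have hf1 : ∀ y ∈ I, HasDerivAt (fun z => C * ψa z + D * φa z)
      (C * deriv ψa y + D * deriv φa y) y := fun y hy =>
    ((hψad y hy).hasDerivAt.const_mul C).add ((hφad y hy).hasDerivAt.const_mul D)
  have hg2 : ∀ y ∈ I, HasDerivAt (fun z => A * ψl z + B * φl z)
      (A * deriv ψl y + B * deriv φl y) y := fun y hy =>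
    ((hψld y hy).hasDerivAt.const_mul A).add ((hφld y hy).hasDerivAt.const_mul B)
  rcases lt_trichotomy x ℓ with hlt | heq | hgt
  · -- x < ℓ
    have hevΦ : (fun y => if y ≤ ℓ then C * ψa y + D * φa y else φl y)
        =ᶠ[nhds x] (fun z => C * ψa z + D * φa z) := by
      filter_upwards [Iio_mem_nhds hlt] with y hy
      simp [le_of_lt (Set.mem_Iio.mp hy)]
    have hevΨ : (fun y => if y ≤ ℓ then ψa y else A * ψl y + B * φl y)
        =ᶠ[nhds x] ψa := by
      filter_upwards [Iio_mem_nhds hlt] with y hy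
      simp [le_of_lt (Set.mem_Iio.mp hy)]
    have hW : Wron φa ψa x = Wa * scaleDensity a b x₀ x := hsa x hx
    simp only [Wron, hevΦ.deriv_eq, hevΨ.deriv_eq, hevΦ.eq_of_nhds, hevΨ.eq_of_nhds,
      (hf1 x hx).deriv]
    have : (C * ψa x + D * φa x) * deriv ψa x - ψa x * (C * deriv ψa x + D * deriv φa x)
        = D * Wron φa ψa x := by simp only [Wron]; ring
    rw [this, hW, hD, hWaℓ]
    field_simp
    simp only [Wron]; ring
  · -- x = ℓ
    subst heq
    have hm1 : C * ψa x + D * φa x = φl x := by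
      rw [hC, hD]
      field_simp
      simp only [Wron]; ring
    have hm2 : C * deriv ψa x + D * deriv φa x = deriv φl x := by
      rw [hC, hD]
      field_simp
      simp only [Wron]; ring
    have hm3 : ψa x = A * ψl x + B * φl x := by
      rw [hA, hB]
      field_simp
      simp only [Wron]; ring
    have hm4 : deriv ψa x = A * deriv ψl x + B * deriv φl x := by
      rw [hA, hB]
      field_simp
      simp only [Wron]; ring
    have hΦd : HasDerivAt (fun y => if y ≤ x then C * ψa y + D * φa y else φl y)
        (deriv φl x) x := by
      refine glue_hasDerivAt ?_ (hφld x hx).hasDerivAt hm1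
      rw [← hm2]; exact hf1 x hx
    have hΨd : HasDerivAt (fun y => if y ≤ x then ψa y else A * ψl y + B * φl y)
        (deriv ψa x) x := by
      refine glue_hasDerivAt (hψad x hx).hasDerivAt ?_ hm3
      rw [hm4]; exact hg2 x hx
    simp only [Wron, hΦd.deriv, hΨd.deriv, le_refl, if_true]
    rw [hm1]
    rw [div_mul_cancel₀ _ hsℓ.ne']
  · -- x > ℓ
    have hevΦ : (fun y => if y ≤ ℓ then C * ψa y + D * φa y else φl y)
        =ᶠ[nhds x] φl := by
      filter_upwards [Ioi_mem_nhds hgt] with y hy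
      simp [not_le.mpr (Set.mem_Ioi.mp hy)]
    have hevΨ : (fun y => if y ≤ ℓ then ψa y else A * ψl y + B * φl y)
        =ᶠ[nhds x] (fun z => A * ψl z + B * φl z) := by
      filter_upwards [Ioi_mem_nhds hgt] with y hy
      simp [not_le.mpr (Set.mem_Ioi.mp hy)]
    have hW : Wron φl ψl x = Wl * scaleDensity a b x₀ x := hsl x hx
    simp only [Wron, hevΦ.deriv_eq, hevΨ.deriv_eq, hevΦ.eq_of_nhds, hevΨ.eq_of_nhds,
      (hg2 x hx).deriv]
    have : φl x * (A * deriv ψl x + B * deriv φl x) - (A * ψl x + B * φl x) * deriv φl x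
        = A * Wron φl ψl x := by simp only [Wron]; ring
    rw [this, hW, hA, hWlℓ]
    field_simp
    simp only [Wron]; ring
end

section
/- The function u(x) = x^{−μ/2} K_μ(2√(2ρx)/ν) satisfies the squared Bessel eigenvalue equation (1/2)ν²x u''(x) + γ₀ u'(x) = ρ u(x) for x > 0, where μ = 2γ₀/ν² − 1. -/
/-- Algebraic core of the computation. -/
lemma besselK_alg (ν ρ μ x s A Kz K1 K2 : ℝ) (hν : ν ≠ 0) (hs : s ≠ 0) (hx : x ≠ 0)
    (hρ : ρ ≠ 0) (hs2 : s ^ 2 = 2 * ρ * x)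
    (hB : (2*s/ν) ^ 2 * K2 + (2*s/ν) * K1 - ((2*s/ν) ^ 2 + μ ^ 2) * Kz = 0) :
    1/2 * ν ^ 2 * x *
      (-μ / 2 * ((-μ / 2 - 1) * (A / x / x)) * Kz + -μ / 2 * (A / x) * (K1 * (2 * ρ / (s * ν))) +
        (-μ / 2 * (A / x) * (K1 * (2 * ρ / (s * ν))) +
          A * (K2 * (2 * ρ / (s * ν)) * (2 * ρ / (s * ν)) +
            K1 * ((0 * (s * ν) - 2 * ρ * (ρ / s * ν)) / (s * ν) ^ 2))))
    + (μ + 1) * ν ^ 2 / 2 *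
      (-μ / 2 * (A / x) * Kz + A * (K1 * (2 * ρ / (s * ν))))
    = ρ * (A * Kz) := by
  have hxeq : x = s ^ 2 / (2 * ρ) := by field_simp [hs2]; linear_combination -hs2
  subst hxeq
  field_simp at hB ⊢
  ring_nf at hB ⊢
  linear_combination (A*ρ^2) * hB

/-- If `K = K_μ` satisfies the modified Bessel equation
`z² K'' + z K' − (z² + μ²) K = 0` on `(0,∞)`, then
`u(x) = x^(−μ/2) K(2√(2ρx)/ν)` satisfies the squared Bessel eigenvalue equation
`(1/2) ν² x u'' + γ₀ u' = ρ u` for `x > 0`, where `μ = 2γ₀/ν² − 1`. -/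
theorem besselK_eigenfunction (ν ρ γ₀ μ : ℝ) (hν : 0 < ν) (hρ : 0 < ρ) (hγ : 0 < γ₀)
    (hμ : μ = 2 * γ₀ / ν ^ 2 - 1) (K : ℝ → ℝ)
    (hK1 : ∀ z > (0:ℝ), DifferentiableAt ℝ K z)
    (hK2 : ∀ z > (0:ℝ), DifferentiableAt ℝ (deriv K) z)
    (hK : ∀ z > (0:ℝ),
      z ^ 2 * deriv (deriv K) z + z * deriv K z - (z ^ 2 + μ ^ 2) * K z = 0) :
    ∀ x > (0:ℝ),
      (1/2) * ν ^ 2 * x *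
          deriv (deriv (fun y : ℝ => y ^ (-μ/2 : ℝ) * K (2 * Real.sqrt (2 * ρ * y) / ν))) x
        + γ₀ * deriv (fun y : ℝ => y ^ (-μ/2 : ℝ) * K (2 * Real.sqrt (2 * ρ * y) / ν)) x
      = ρ * (x ^ (-μ/2 : ℝ) * K (2 * Real.sqrt (2 * ρ * x) / ν)) := by
  intro x hx
  set p : ℝ := -μ/2 with hp
  have hsqrt : ∀ y > (0:ℝ), HasDerivAt (fun t : ℝ => Real.sqrt (2*ρ*t))
      (ρ / Real.sqrt (2*ρ*y)) y := by
    intro y hy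
    have hyy : (0:ℝ) < 2*ρ*y := by positivity
    have h1 : HasDerivAt (fun t : ℝ => 2*ρ*t) (2*ρ) y := by
      simpa using (hasDerivAt_id y).const_mul (2*ρ)
    have : HasDerivAt (fun t : ℝ => Real.sqrt (2*ρ*t)) (1 / (2 * Real.sqrt (2 * ρ * y)) * (2 * ρ)) y := (Real.hasDerivAt_sqrt hyy.ne').comp y h1
    convert this using 1
    have : Real.sqrt (2*ρ*y) ≠ 0 := by positivity
    field_simp
  have hg : ∀ y > (0:ℝ), HasDerivAt (fun t : ℝ => 2 * Real.sqrt (2*ρ*t) / ν)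
      (2*ρ/(Real.sqrt (2*ρ*y)*ν)) y := by
    intro y hy
    have : HasDerivAt (fun t : ℝ => 2 * Real.sqrt (2*ρ*t) / ν) (2 * (ρ / Real.sqrt (2*ρ*y)) / ν) y := ((hsqrt y hy).const_mul 2).div_const ν
    convert this using 1
    have : Real.sqrt (2*ρ*y) ≠ 0 := by positivity
    field_simp
  have hzpos : ∀ y > (0:ℝ), (0:ℝ) < 2 * Real.sqrt (2*ρ*y) / ν := by
    intro y hy
    have : (0:ℝ) < Real.sqrt (2*ρ*y) := Real.sqrt_pos.mpr (by positivity)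
    positivity
  have key : ∀ y > (0:ℝ),
      HasDerivAt (fun t : ℝ => t ^ (p:ℝ) * K (2 * Real.sqrt (2*ρ*t) / ν))
      (p * y ^ (p-1) * K (2*Real.sqrt (2*ρ*y)/ν)
        + y ^ (p:ℝ) * (deriv K (2*Real.sqrt (2*ρ*y)/ν) * (2*ρ/(Real.sqrt (2*ρ*y)*ν)))) y := by
    intro y hy
    have h4 : HasDerivAt (fun t : ℝ => K (2 * Real.sqrt (2*ρ*t) / ν))
        (deriv K (2*Real.sqrt (2*ρ*y)/ν) * (2*ρ/(Real.sqrt (2*ρ*y)*ν))) y :=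
      ((hK1 _ (hzpos y hy)).hasDerivAt.comp y (hg y hy))
    have h5 : HasDerivAt (fun t : ℝ => t ^ (p:ℝ)) (p * y ^ (p-1)) y := by
      simpa using (Real.hasDerivAt_rpow_const (p := p) (Or.inl hy.ne'))
    exact h5.mul h4
  set s : ℝ := Real.sqrt (2 * ρ * x) with hsdef
  have hs0 : 0 < s := Real.sqrt_pos.mpr (by positivity)
  have hs2 : s ^ 2 = 2 * ρ * x := Real.sq_sqrt (by positivity)
  set z : ℝ := 2 * s / ν with hzdef
  have hz0 : 0 < z := by positivity
  set F : ℝ → ℝ := fun y => p * y ^ (p-1) * K (2*Real.sqrt (2*ρ*y)/ν)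
        + y ^ (p:ℝ) * (deriv K (2*Real.sqrt (2*ρ*y)/ν) * (2*ρ/(Real.sqrt (2*ρ*y)*ν))) with hF
  have hev : deriv (fun y : ℝ => y ^ (p:ℝ) * K (2 * Real.sqrt (2*ρ*y)/ν)) =ᶠ[nhds x] F := by
    filter_upwards [Ioi_mem_nhds hx] with y hy using (key y hy).deriv
  have hd1 : deriv (fun y : ℝ => y ^ (p:ℝ) * K (2 * Real.sqrt (2*ρ*y)/ν)) x = F x :=
    (key x hx).deriv
  have hA1 : HasDerivAt (fun t : ℝ => p * t ^ (p-1)) (p * ((p-1) * x ^ (p-1-1))) x := by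
    exact (Real.hasDerivAt_rpow_const (p := p-1) (Or.inl hx.ne')).const_mul p
  have hKg : HasDerivAt (fun t : ℝ => K (2 * Real.sqrt (2*ρ*t) / ν))
      (deriv K z * (2*ρ/(s*ν))) x :=
    ((hK1 _ hz0).hasDerivAt.comp x (hg x hx))
  have hdKg : HasDerivAt (fun t : ℝ => deriv K (2 * Real.sqrt (2*ρ*t) / ν))
      (deriv (deriv K) z * (2*ρ/(s*ν))) x :=
    by have := (hK2 _ hz0).hasDerivAt.comp x (hg x hx); exact this
  have hrp : HasDerivAt (fun t : ℝ => t ^ (p:ℝ)) (p * x ^ (p-1)) x := by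
    simpa using (Real.hasDerivAt_rpow_const (p := p) (Or.inl hx.ne'))
  have hinv : HasDerivAt (fun t : ℝ => 2*ρ/(Real.sqrt (2*ρ*t)*ν))
      ((0 * (s*ν) - 2*ρ * ((ρ/s)*ν)) / (s*ν)^2) x := by
    exact (hasDerivAt_const x (2*ρ)).div ((hsqrt x hx).mul_const ν) (by positivity)
  have hFd : HasDerivAt F
      ( (p * ((p-1) * x ^ (p-1-1)) * K z + p * x ^ (p-1) * (deriv K z * (2*ρ/(s*ν))))
        + (p * x ^ (p-1) * (deriv K z * (2*ρ/(s*ν)))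
            + x ^ (p:ℝ) * (deriv (deriv K) z * (2*ρ/(s*ν)) * (2*ρ/(s*ν))
              + deriv K z * ((0 * (s*ν) - 2*ρ * ((ρ/s)*ν)) / (s*ν)^2)))) x := by
    exact (hA1.mul hKg).add (hrp.mul (hdKg.mul hinv))
  have hd2 : deriv (deriv (fun y : ℝ => y ^ (p:ℝ) * K (2 * Real.sqrt (2*ρ*y)/ν))) x
      = ( (p * ((p-1) * x ^ (p-1-1)) * K z + p * x ^ (p-1) * (deriv K z * (2*ρ/(s*ν))))
        + (p * x ^ (p-1) * (deriv K z * (2*ρ/(s*ν)))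
            + x ^ (p:ℝ) * (deriv (deriv K) z * (2*ρ/(s*ν)) * (2*ρ/(s*ν))
              + deriv K z * ((0 * (s*ν) - 2*ρ * ((ρ/s)*ν)) / (s*ν)^2)))) := by
    rw [Filter.EventuallyEq.deriv_eq hev]
    exact hFd.deriv
  rw [hd2, hd1]
  simp only [hF]
  rw [← hsdef]
  have hx1 : x ^ (p-1) = x ^ (p:ℝ) / x := by
    rw [Real.rpow_sub hx, Real.rpow_one]
  have hx2' : x ^ (p-1-1) = x ^ (p:ℝ) / x / x := by
    rw [Real.rpow_sub hx, Real.rpow_sub hx, Real.rpow_one]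
  have hB := hK z hz0
  have hγ₀ : γ₀ = (μ+1) * ν^2 / 2 := by
    rw [hμ]
    have h2 : (ν:ℝ)^2 ≠ 0 := by positivity
    field_simp
    ring
  rw [hx1, hx2']
  set A : ℝ := x ^ (p:ℝ) with hAdef
  set Kz : ℝ := K z with hKzdef
  set K1 : ℝ := deriv K z with hK1def
  set K2 : ℝ := deriv (deriv K) z with hK2def
  have hs2' : s ^ 2 = 2 * ρ * x := hs2
  have hzdef' : z = 2 * s / ν := hzdef
  clear_value s z A Kz K1 K2 p
  subst hp
  subst hzdef'
  rw [hγ₀]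
  exact besselK_alg ν ρ μ x s A Kz K1 K2 hν.ne' hs0.ne' hx.ne' hρ.ne' hs2' hB
end
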